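/- Let σ^S : ℝ³ → ℝ be differentiable with σ^S(x) > 0 for all x, let σ^A, G : ℝ³ → ℝ, and let ρ : ℝ × ℝ³ → ℝ be differentiable in t with ρ(t, ·) twice differentiable for each t. Define g(t, x, v) := −(v·∇ₓρ(t, x))/σ^S(x). If (ρ, g) satisfies the macro equation ∂ₜρ(t, x) + (1/(4π)) ∫_{S²} v·∇ₓ g(t, x, v) dμ(v) = −σ^A(x) ρ(t, x) + G(x) for all (t, x), then ρ satisfies the limiting diffusion equation ∂ₜρ(t, x) = ∇ₓ·( (1/(3σ^S(x))) ∇ₓρ(t, x) ) − σ^A(x) ρ(t, x) + G(x) for all (t, x). -/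

import Mathlib

open MeasureTheory Real

/-- The unit sphere `S² ⊂ ℝ³`. -/
abbrev UnitSphere : Type := Metric.sphere (0 : EuclideanSpace ℝ (Fin 3)) 1

/-- The surface measure on `S²` (total measure `4π`). -/
noncomputable def sphereMeasure : Measure UnitSphere :=
  (volume : Measure (EuclideanSpace ℝ (Fin 3))).toSphere

/-- The divergence `∇·F = Σᵢ ∂ᵢ Fᵢ` of a vector field on `ℝ³`. -/
noncomputable def div3 (F : EuclideanSpace ℝ (Fin 3) → EuclideanSpace ℝ (Fin 3))
    (x : EuclideanSpace ℝ (Fin 3)) : ℝ :=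
  ∑ i : Fin 3, fderiv ℝ F x (EuclideanSpace.single i 1) i

local notation "E3" => EuclideanSpace ℝ (Fin 3)

instance : IsFiniteMeasure sphereMeasure := by unfold sphereMeasure; infer_instance

lemma integrable_sphere {φ : UnitSphere → ℝ} (h : Continuous φ) :
    Integrable φ sphereMeasure :=
  h.integrable_of_hasCompactSupport
    (IsCompact.of_isClosed_subset isCompact_univ (isClosed_tsupport φ) (Set.subset_univ _))

lemma cont_coord (i : Fin 3) : Continuous fun v : UnitSphere => (v : E3) i :=
  (EuclideanSpace.proj (𝕜 := ℝ) i).continuous.comp continuous_subtype_val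

lemma sphereMeasure_univ_real : (sphereMeasure Set.univ).toReal = 4 * π := by
  rw [sphereMeasure, Measure.toSphere_apply_univ, EuclideanSpace.volume_ball]
  have h52 : Real.Gamma ((Fintype.card (Fin 3) : ℝ) / 2 + 1) = 3 / 4 * √π := by
    have : ((Fintype.card (Fin 3) : ℝ) / 2 + 1) = 3 / 2 + 1 := by norm_num
    rw [this, Real.Gamma_add_one (by norm_num)]
    have : (3 / 2 : ℝ) = 1 / 2 + 1 := by norm_num
    rw [this, Real.Gamma_add_one (by norm_num), Real.Gamma_one_half_eq]
    ring
  rw [h52]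
  have hs : √π > 0 := Real.sqrt_pos.2 pi_pos
  have hval : √π ^ Fintype.card (Fin 3) / (3 / 4 * √π) = 4 / 3 * π := by
    have h3 : Fintype.card (Fin 3) = 3 := by simp
    rw [h3]
    have : √π ^ 3 = π * √π := by
      rw [pow_succ, pow_two, Real.mul_self_sqrt pi_pos.le]
    rw [this]
    field_simp
  rw [hval]
  rw [finrank_euclideanSpace]
  simp only [Fintype.card_fin, ENNReal.ofReal_one, one_pow, one_mul]
  rw [ENNReal.toReal_mul, ENNReal.toReal_ofReal (by positivity)]
  norm_num
  ring


lemma int_exp1 : Integrable fun x : ℝ => exp (-x ^ 2) := by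
  simpa using integrable_exp_neg_mul_sq (b := 1) one_pos

lemma int_x1 : Integrable fun x : ℝ => x * exp (-x ^ 2) := by
  simpa using integrable_mul_exp_neg_mul_sq (b := 1) one_pos

lemma int_x2 : Integrable fun x : ℝ => x ^ 2 * exp (-x ^ 2) := by
  have := integrable_rpow_mul_exp_neg_mul_sq (b := 1) one_pos (s := 2) (by norm_num)
  have h2 : ((2 : ℝ)) = ((2 : ℕ) : ℝ) := by norm_num
  simp only [one_mul, h2, Real.rpow_natCast] at this
  simpa using this

lemma I0_eq : ∫ x : ℝ, exp (-x ^ 2) = √π := by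
  simpa using integral_gaussian 1

lemma I1_eq : ∫ x : ℝ, x * exp (-x ^ 2) = 0 := by
  have h := integral_neg_eq_self (fun x : ℝ => x * exp (-x ^ 2)) volume
  simp only [neg_sq, neg_mul] at h
  rw [integral_neg] at h
  linarith

lemma I2_pos : 0 < ∫ x : ℝ, x ^ 2 * exp (-x ^ 2) := by
  refine (integral_pos_iff_support_of_nonneg (fun x => by positivity) int_x2).2 ?_
  have hsub : Set.Ioi (0 : ℝ) ⊆ Function.support fun x : ℝ => x ^ 2 * exp (-x ^ 2) := by
    intro x hx
    have : (0:ℝ) < x := hx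
    simp only [Function.mem_support]
    positivity
  calc (0 : ENNReal) < volume (Set.Ioi (0:ℝ)) := by simp [Real.volume_Ioi]
  _ ≤ _ := measure_mono hsub

lemma euclidean_norm_sq (x : E3) : ‖x‖ ^ 2 = ∑ k, x k ^ 2 := by
  rw [EuclideanSpace.norm_eq, Real.sq_sqrt (Finset.sum_nonneg fun i _ => sq_nonneg _)]
  simp [sq_abs]

lemma euclidean_integral_prod (f : E3 → ℝ) (fs : Fin 3 → ℝ → ℝ)
    (hf : ∀ x : E3, f x = ∏ k, fs k (x k)) :
    ∫ x : E3, f x = ∏ k, ∫ t : ℝ, fs k t := by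
  rw [← MeasurePreserving.integral_comp
    (EuclideanSpace.volume_preserving_symm_measurableEquiv_toLp (Fin 3)).symm
    (MeasurableEquiv.measurableEmbedding _) f]
  rw [← MeasureTheory.integral_fintype_prod_eq_prod (f := fs)]
  congr 1
  funext y
  rw [hf]
  rfl

lemma polar_formula (φ : UnitSphere → ℝ) (f : E3 → ℝ)
    (hf : ∀ (v : UnitSphere) (r : Set.Ioi (0:ℝ)), f ((r : ℝ) • (v : E3)) =
      φ v * ((r : ℝ) ^ 2 * exp (-(r : ℝ) ^ 2))) :
    ∫ x : E3, f x = (∫ v, φ v ∂sphereMeasure) *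
      ∫ r : Set.Ioi (0:ℝ), ((r : ℝ) ^ 2 * exp (-(r : ℝ) ^ 2)) ∂(Measure.volumeIoiPow 2) := by
  have hdim : Module.finrank ℝ E3 - 1 = 2 := by
    rw [finrank_euclideanSpace]; simp
  have h1 : ∫ x : E3, f x
      = ∫ x : ({0}ᶜ : Set E3), f x ∂((volume : Measure E3).comap Subtype.val) := by
    rw [integral_subtype_comap (measurableSet_singleton (0:E3)).compl f,
      MeasureTheory.restrict_compl_singleton]
  have h2 := MeasurePreserving.integral_comp
    (Measure.measurePreserving_homeomorphUnitSphereProd (volume : Measure E3))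
    (Homeomorph.measurableEmbedding _)
    (fun p : UnitSphere × Set.Ioi (0:ℝ) => φ p.1 * ((p.2 : ℝ) ^ 2 * exp (-(p.2 : ℝ) ^ 2)))
  rw [hdim] at h2
  have h3 : ∀ x : ({0}ᶜ : Set E3),
      (fun p : UnitSphere × Set.Ioi (0:ℝ) => φ p.1 * ((p.2 : ℝ) ^ 2 * exp (-(p.2 : ℝ) ^ 2)))
        (homeomorphUnitSphereProd E3 x) = f x := by
    intro x
    have hx : (x : E3) ≠ 0 := x.2
    dsimp only
    rw [← hf (homeomorphUnitSphereProd E3 x).1 (homeomorphUnitSphereProd E3 x).2]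
    simp only [homeomorphUnitSphereProd_apply_fst_coe, homeomorphUnitSphereProd_apply_snd_coe]
    rw [smul_inv_smul₀ (norm_ne_zero_iff.2 hx)]
  rw [h1, ← integral_congr_ae (Filter.Eventually.of_forall h3)] at *
  rw [h2]
  rw [show ((volume : Measure E3).toSphere) = sphereMeasure from rfl] at *
  exact integral_prod_mul φ (fun r : Set.Ioi (0:ℝ) => (r : ℝ) ^ 2 * exp (-(r : ℝ) ^ 2))

lemma sphere_moment (i j : Fin 3) :
    ∫ v : UnitSphere, ((v : E3) i * (v : E3) j) ∂sphereMeasure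
      = if i = j then 4 * π / 3 else 0 := by
  classical
  set S := ∫ r : Set.Ioi (0:ℝ), ((r : ℝ) ^ 2 * exp (-(r : ℝ) ^ 2)) ∂(Measure.volumeIoiPow 2)
    with hS_def
  set M := ∫ t : ℝ, t ^ 2 * exp (-t ^ 2) with hM_def
  -- the key polar identity
  have key : ∀ i j : Fin 3,
      (∫ v : UnitSphere, ((v : E3) i * (v : E3) j) ∂sphereMeasure) * S
        = ∫ x : E3, (x i * x j * exp (-‖x‖ ^ 2)) := by
    intro i j
    rw [polar_formula (fun v => (v : E3) i * (v : E3) j)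
      (fun x => x i * x j * exp (-‖x‖ ^ 2)) ?_]
    intro v r
    dsimp only
    have hv : ∀ k, ((r : ℝ) • (v : E3)) k = (r : ℝ) * (v : E3) k := fun k => rfl
    have hvn : ‖(v : E3)‖ = 1 := mem_sphere_zero_iff_norm.1 v.2
    have hn : ‖(r : ℝ) • (v : E3)‖ ^ 2 = (r : ℝ) ^ 2 := by
      rw [norm_smul, hvn, mul_one, Real.norm_eq_abs, sq_abs]
    rw [hv, hv, hn]
    ring
  -- the pi-factorized value
  have pival : ∀ i j : Fin 3, ∫ x : E3, (x i * x j * exp (-‖x‖ ^ 2))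
      = ∏ k : Fin 3, ∫ t : ℝ,
          ((if k = i then t else 1) * (if k = j then t else 1) * exp (-t ^ 2)) := by
    intro i j
    apply euclidean_integral_prod
    intro x
    rw [Finset.prod_mul_distrib, Finset.prod_mul_distrib, Finset.prod_ite_eq',
      Finset.prod_ite_eq', ← Real.exp_sum]
    simp [euclidean_norm_sq x]
  -- diagonal value
  have diag : ∀ k : Fin 3, (∫ v : UnitSphere, ((v : E3) k * (v : E3) k) ∂sphereMeasure) * S
      = M * π := by
    intro k
    rw [key k k, pival k k]
    have hfac : ∀ l : Fin 3, ∫ t : ℝ,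
        ((if l = k then t else 1) * (if l = k then t else 1) * exp (-t ^ 2))
          = if l = k then M else √π := by
      intro l
      split_ifs with h
      · rw [hM_def]; congr 1; funext t; ring
      · simp [I0_eq]
    rw [Finset.prod_congr rfl fun l _ => hfac l,
      ← Finset.mul_prod_erase Finset.univ _ (Finset.mem_univ k), if_pos rfl,
      Finset.prod_congr rfl fun l hl => if_neg (Finset.ne_of_mem_erase hl),
      Finset.prod_const, Finset.card_erase_of_mem (Finset.mem_univ k)]
    norm_num [Real.sq_sqrt pi_pos.le]
  -- off-diagonal : zero
  have offd : ∀ i j : Fin 3, i ≠ j →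
      (∫ v : UnitSphere, ((v : E3) i * (v : E3) j) ∂sphereMeasure) * S = 0 := by
    intro i j hij
    rw [key i j, pival i j]
    apply Finset.prod_eq_zero (Finset.mem_univ i)
    have : (fun t : ℝ => ((if i = i then t else 1) * if i = j then t else 1) * exp (-t ^ 2))
        = fun t : ℝ => t * exp (-t ^ 2) := by
      funext t; simp [hij]
    rw [this, I1_eq]
  -- trace identity
  have trace : ∑ k : Fin 3, ∫ v : UnitSphere, ((v : E3) k * (v : E3) k) ∂sphereMeasure
      = 4 * π := by
    rw [← integral_finset_sum _ fun k _ => integrable_sphere (φ := fun v : UnitSphere => (v : E3) k * (v : E3) k) ((cont_coord k).mul (cont_coord k))]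
    have h1 : ∀ v : UnitSphere, ∑ k : Fin 3, ((v : E3) k * (v : E3) k) = 1 := by
      intro v
      have h2 := euclidean_norm_sq (v : E3)
      rw [mem_sphere_zero_iff_norm.1 v.2, one_pow] at h2
      calc ∑ k : Fin 3, ((v : E3) k * (v : E3) k) = ∑ k : Fin 3, ((v : E3) k) ^ 2 := by
            refine Finset.sum_congr rfl fun k _ => ?_; ring
      _ = 1 := h2.symm
    simp only [h1]
    rw [integral_const]
    simp [Measure.real, sphereMeasure_univ_real]
  -- combine
  have hM0 : (0:ℝ) < M := I2_pos
  have hsum : (4 * π) * S = 3 * (M * π) := by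
    have hsum2 : ∑ k : Fin 3,
        ((∫ v : UnitSphere, ((v : E3) k * (v : E3) k) ∂sphereMeasure) * S)
          = ∑ _k : Fin 3, (M * π) := Finset.sum_congr rfl fun k _ => diag k
    rw [← Finset.sum_mul, trace, Finset.sum_const] at hsum2
    simpa using hsum2
  have hS : S = 3 / 4 * M := by
    have h4 : (4:ℝ) * π ≠ 0 := by positivity
    refine mul_left_cancel₀ h4 (hsum.trans ?_)
    ring
  have hS0 : S ≠ 0 := by rw [hS]; positivity
  split_ifs with h
  · subst h
    have hd := diag i
    have hcancel : (∫ v : UnitSphere, ((v : E3) i * (v : E3) i) ∂sphereMeasure) * 3 = 4 * π := by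
      refine mul_right_cancel₀ hM0.ne' ?_
      rw [hS] at hd
      linear_combination 4 * hd
    linarith
  · exact (mul_eq_zero.1 (offd i j h)).resolve_right hS0


/-- The formal `ε → 0` diffusion limit of the macro-micro decomposition: when the micro
part takes its limiting form `g = −(v·∇ₓρ)/σ^S`, the macro equation reduces to the
diffusion equation `∂ₜρ = ∇ₓ·((1/(3σ^S))∇ₓρ) − σ^A ρ + G`. -/
theorem diffusion_limit_of_macro_equation
    (σS : EuclideanSpace ℝ (Fin 3) → ℝ) (hσS_diff : Differentiable ℝ σS)
    (hσS_pos : ∀ x, 0 < σS x)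
    (σA G : EuclideanSpace ℝ (Fin 3) → ℝ)
    (ρ : ℝ → EuclideanSpace ℝ (Fin 3) → ℝ)
    (hρ_t : ∀ x, Differentiable ℝ fun t => ρ t x)
    (hρ_x : ∀ t, Differentiable ℝ (ρ t))
    (hρ_xx : ∀ t, Differentiable ℝ fun x => gradient (ρ t) x)
    (g : ℝ → EuclideanSpace ℝ (Fin 3) → UnitSphere → ℝ)
    (hg : ∀ t x (v : UnitSphere),
      g t x v = -(inner ℝ (v : EuclideanSpace ℝ (Fin 3)) (gradient (ρ t) x) : ℝ) / σS x)
    (hmacro : ∀ t x,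
      deriv (fun s => ρ s x) t
        + (1 / (4 * π)) * ∫ v : UnitSphere,
            (inner ℝ (v : EuclideanSpace ℝ (Fin 3))
              (gradient (fun y => g t y v) x) : ℝ) ∂sphereMeasure
      = -σA x * ρ t x + G x) :
    ∀ t x,
      deriv (fun s => ρ s x) t
        = div3 (fun y => (1 / (3 * σS y)) • gradient (ρ t) y) x
          - σA x * ρ t x + G x := by
  intro t x
  have hσ_ne : ∀ y, σS y ≠ 0 := fun y => (hσS_pos y).ne'
  set u : E3 → E3 := fun y => gradient (ρ t) y with hu_def
  have hu : Differentiable ℝ u := hρ_xx t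
  set H : E3 → E3 := fun y => (-(σS y)⁻¹) • u y with hH_def
  have hH : Differentiable ℝ H := ((hσS_diff.inv hσ_ne).neg).smul hu
  set A := fderiv ℝ H x with hA_def
  -- rewrite g
  have hgfun : ∀ v : UnitSphere, (fun y => g t y v) = fun y => (inner ℝ (v : E3) (H y) : ℝ) := by
    intro v
    funext y
    rw [hg, hH_def]
    dsimp only
    rw [real_inner_smul_right]
    field_simp
    rfl
  -- gradient identity
  have hgrad : ∀ v : UnitSphere,
      (inner ℝ (v : E3) (gradient (fun y => g t y v) x) : ℝ) = inner ℝ (v : E3) (A (v : E3)) := by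
    intro v
    rw [hgfun v]
    have hfd : fderiv ℝ (fun y => (inner ℝ (v : E3) (H y) : ℝ)) x
        = (innerSL ℝ (v : E3)).comp A :=
      (((innerSL ℝ (v : E3)).hasFDerivAt).comp x (hH x).hasFDerivAt).fderiv
    rw [real_inner_comm]
    show (inner ℝ (gradient _ x) _ : ℝ) = _
    rw [show gradient (fun y => (inner ℝ (v : E3) (H y) : ℝ)) x
        = (InnerProductSpace.toDual ℝ E3).symm ((innerSL ℝ (v : E3)).comp A) from by
      rw [← hfd]; rfl]
    rw [InnerProductSpace.toDual_symm_apply]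
    rfl
  -- coordinate expansion
  have hexp : ∀ w : E3, (inner ℝ w (A w) : ℝ)
      = ∑ j : Fin 3, ∑ i : Fin 3,
          (A (EuclideanSpace.single j 1) i) * (w i * w j) := by
    intro w
    have hwrep : w = ∑ j : Fin 3, w j • (EuclideanSpace.single j (1:ℝ) : E3) := by
      have h := (EuclideanSpace.basisFun (Fin 3) ℝ).sum_repr w
      simp only [EuclideanSpace.basisFun_apply, EuclideanSpace.basisFun_repr] at h
      exact h.symm
    have hAw : A w = ∑ j : Fin 3, w j • A (EuclideanSpace.single j 1) := by
      conv_lhs => rw [hwrep]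
      rw [map_sum]
      exact Finset.sum_congr rfl fun j _ => A.map_smul _ _
    rw [hAw, inner_sum]
    refine Finset.sum_congr rfl fun j _ => ?_
    rw [real_inner_smul_right]
    have hip : (inner ℝ w (A (EuclideanSpace.single j 1)) : ℝ)
        = ∑ i : Fin 3, w i * (A (EuclideanSpace.single j 1)) i := by
      simp [PiLp.inner_apply, RCLike.inner_apply]
      exact Finset.sum_congr rfl fun i _ => mul_comm _ _
    rw [hip, Finset.mul_sum]
    exact Finset.sum_congr rfl fun i _ => by ring
  -- the integral value
  have hint : ∫ v : UnitSphere,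
      (inner ℝ (v : E3) (gradient (fun y => g t y v) x) : ℝ) ∂sphereMeasure
        = (4 * π / 3) * ∑ k : Fin 3, A (EuclideanSpace.single k 1) k := by
    have step1 : ∫ v : UnitSphere,
        (inner ℝ (v : E3) (gradient (fun y => g t y v) x) : ℝ) ∂sphereMeasure
          = ∫ v : UnitSphere, (∑ j : Fin 3, ∑ i : Fin 3,
              (A (EuclideanSpace.single j 1) i) * ((v : E3) i * (v : E3) j)) ∂sphereMeasure := by
      refine integral_congr_ae (Filter.Eventually.of_forall fun v => ?_)
      dsimp only
      rw [hgrad v, hexp]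
    rw [step1]
    rw [integral_finset_sum _ fun j _ => integrable_finset_sum _ fun i _ =>
      (integrable_sphere (φ := fun v : UnitSphere => (v : E3) i * (v : E3) j) ((cont_coord i).mul (cont_coord j))).const_mul _]
    have step2 : ∀ j : Fin 3, ∫ v : UnitSphere, (∑ i : Fin 3,
        (A (EuclideanSpace.single j 1) i) * ((v : E3) i * (v : E3) j)) ∂sphereMeasure
          = (A (EuclideanSpace.single j 1) j) * (4 * π / 3) := by
      intro j
      rw [integral_finset_sum _ fun i _ =>
        (integrable_sphere (φ := fun v : UnitSphere => (v : E3) i * (v : E3) j) ((cont_coord i).mul (cont_coord j))).const_mul _]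
      have : ∀ i : Fin 3, ∫ v : UnitSphere,
          (A (EuclideanSpace.single j 1) i) * ((v : E3) i * (v : E3) j) ∂sphereMeasure
            = (A (EuclideanSpace.single j 1) i) * (if i = j then 4 * π / 3 else 0) := by
        intro i
        rw [integral_const_mul _ _, sphere_moment]
      rw [Finset.sum_congr rfl fun i _ => this i]
      simp [mul_ite]
    rw [Finset.sum_congr rfl fun j _ => step2 j, ← Finset.sum_mul]
    ring
  -- divergence identity
  have hdiv : div3 (fun y => (1 / (3 * σS y)) • gradient (ρ t) y) x
      = -(1 / 3) * ∑ k : Fin 3, A (EuclideanSpace.single k 1) k := by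
    have hfun : (fun y => (1 / (3 * σS y)) • gradient (ρ t) y)
        = fun y => (-(1/3) : ℝ) • H y := by
      funext y
      rw [hH_def]
      dsimp only
      rw [smul_smul]
      congr 1
      field_simp
    rw [hfun, div3]
    have hsm : ∀ w : E3, fderiv ℝ (fun y => (-(1/3) : ℝ) • H y) x w
        = (-(1/3) : ℝ) • (A w) := by
      intro w
      rw [fderiv_fun_const_smul (hH x)]
      rfl
    rw [Finset.sum_congr rfl fun k _ => by rw [hsm]]
    rw [Finset.mul_sum]
    refine Finset.sum_congr rfl fun k _ => ?_
    rfl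
  -- conclusion
  have hm := hmacro t x
  rw [hint] at hm
  rw [hdiv]
  have h13 : 1 / (4 * π) * (4 * π / 3 * ∑ k : Fin 3, A (EuclideanSpace.single k 1) k)
      = (1 / 3) * ∑ k : Fin 3, A (EuclideanSpace.single k 1) k := by
    have : π ≠ 0 := pi_ne_zero
    field_simp
  rw [h13] at hm
  linarith
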